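/- Let e₁, e₂, e₃ be three pairwise non-parallel lines through a common point x ∈ ℝ² with unit normals n₁, n₂, n₃ (each n_i pointing outward of the triangle formed after perturbation), moving with velocities v₁, v₂, v₃ ∈ ℝ². If the stability condition ⟨v_i, n_i⟩ > ⟨v[v_j, v_k], n_i⟩ holds for one choice of distinct indices (i, j, k), then it holds for all choices of distinct (i, j, k), where v[v_j, v_k] is the unique vector w with ⟨w, v_j⟩ = |v_j|² and ⟨w, v_k⟩ = |v_k|². -/

import Mathlib

open scoped RealInnerProductSpace

noncomputable section

/-- Two-dimensional Euclidean space. -/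
abbrev E2 := EuclideanSpace ℝ (Fin 2)

private lemma inner_coord' (x y : E2) : ⟪x, y⟫ = x 0 * y 0 + x 1 * y 1 := by
  simp [PiLp.inner_apply, Fin.sum_univ_two, RCLike.inner_apply]; ring

private lemma det_ne_zero' {a b : E2} (h : LinearIndependent ℝ ![a, b]) :
    a 0 * b 1 - a 1 * b 0 ≠ 0 := by
  rw [LinearIndependent.pair_iff] at h
  intro hdet
  have e1 : (b 1) • a + (-(a 1)) • b = (0 : E2) := by
    ext j; fin_cases j <;>
      simp only [PiLp.add_apply, PiLp.smul_apply, smul_eq_mul, PiLp.zero_apply,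
        Fin.mk_zero, Fin.mk_one] <;> nlinarith
  obtain ⟨hb1, ha1⟩ := h _ _ e1
  have ha1' : a 1 = 0 := neg_eq_zero.mp ha1
  have e2 : (b 0) • a + (-(a 0)) • b = (0 : E2) := by
    ext j; fin_cases j <;>
      simp only [PiLp.add_apply, PiLp.smul_apply, smul_eq_mul, PiLp.zero_apply,
        Fin.mk_zero, Fin.mk_one] <;> nlinarith
  obtain ⟨hb0, ha0⟩ := h _ _ e2
  have ha0' : a 0 = 0 := neg_eq_zero.mp ha0
  have ha : a = 0 := by ext j; fin_cases j <;> simp [ha0', ha1']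
  have := h 1 0 (by simp [ha])
  simp at this

set_option maxHeartbeats 1600000 in

/-- let `e₁, e₂, e₃` be three pairwise non-parallel lines through a common
point of `ℝ²`, moving with normal velocities `v₁, v₂, v₃` (pairwise linearly independent),
with unit outward normals `n₁, n₂, n₃` (each `nᵢ` parallel to `vᵢ`; 'outward of the
infinitesimal triangle' means that `0` lies in the interior of the convex hull of the `nᵢ`,
i.e. `∑ λᵢ nᵢ = 0` for some positive `λᵢ`).  Let `w i = v[v_j, v_k]` (for `{i,j,k} = {1,2,3}`)
be the unique vector with `⟨w i, v j⟩ = |v j|²` for both `j ≠ i`.  If the stability condition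
`⟨vᵢ, nᵢ⟩ > ⟨v[v_j, v_k], nᵢ⟩` holds for one choice of distinct indices `(i, j, k)`, then it
holds for all such choices. -/
theorem stmt18 (v n : Fin 3 → E2)
    (hind : ∀ i j, i ≠ j → LinearIndependent ℝ ![v i, v j])
    (hnunit : ∀ i, ‖n i‖ = 1)
    (hpar : ∀ i, ∃ c : ℝ, n i = c • v i)
    (hout : ∃ lam : Fin 3 → ℝ, (∀ i, 0 < lam i) ∧ ∑ i, lam i • n i = 0)
    (w : Fin 3 → E2) (hw : ∀ i j, j ≠ i → ⟪w i, v j⟫ = ‖v j‖ ^ 2) :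
    (∃ i, ⟪w i, n i⟫ < ⟪v i, n i⟫) → ∀ i, ⟪w i, n i⟫ < ⟪v i, n i⟫ := by
  intro hex i
  choose c hc using hpar
  obtain ⟨lam, hpos, hsum⟩ := hout
  -- coordinate form of the convexity relation
  have hsumc : ∀ j : Fin 2,
      lam 0 * c 0 * v 0 j + lam 1 * c 1 * v 1 j + lam 2 * c 2 * v 2 j = 0 := by
    intro j
    have h : (∑ i : Fin 3, lam i • n i) j = (0 : E2) j := by rw [hsum]
    simp only [Finset.sum_apply, Fin.sum_univ_three, PiLp.add_apply, PiLp.smul_apply,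
      smul_eq_mul, PiLp.zero_apply, hc] at h
    linear_combination h
  -- coordinate form of the w-conditions
  have hw' : ∀ i j, j ≠ i →
      w i 0 * v j 0 + w i 1 * v j 1 = v j 0 * v j 0 + v j 1 * v j 1 := by
    intro i j hij
    have h := hw i j hij
    rw [inner_coord'] at h
    rw [h, ← real_inner_self_eq_norm_sq, inner_coord']
  have h01 := hw' 0 1 (by decide)
  have h02 := hw' 0 2 (by decide)
  have h10 := hw' 1 0 (by decide)
  have h12 := hw' 1 2 (by decide)
  have h20 := hw' 2 0 (by decide)
  have h21 := hw' 2 1 (by decide)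
  have d01 : v 0 0 * v 1 1 - v 0 1 * v 1 0 ≠ 0 := det_ne_zero' (hind 0 1 (by decide))
  have d12 : v 1 0 * v 2 1 - v 1 1 * v 2 0 ≠ 0 := det_ne_zero' (hind 1 2 (by decide))
  have d20 : v 2 0 * v 0 1 - v 2 1 * v 0 0 ≠ 0 := det_ne_zero' (hind 2 0 (by decide))
  -- scalar abbreviations
  set D01 := v 0 0 * v 1 1 - v 0 1 * v 1 0 with hD01
  set D12 := v 1 0 * v 2 1 - v 1 1 * v 2 0 with hD12
  set D20 := v 2 0 * v 0 1 - v 2 1 * v 0 0 with hD20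
  set S0 := v 0 0 * v 0 0 + v 0 1 * v 0 1 - (w 0 0 * v 0 0 + w 0 1 * v 0 1) with hS0
  set S1 := v 1 0 * v 1 0 + v 1 1 * v 1 1 - (w 1 0 * v 1 0 + w 1 1 * v 1 1) with hS1
  set S2 := v 2 0 * v 2 0 + v 2 1 * v 2 1 - (w 2 0 * v 2 0 + w 2 1 * v 2 1) with hS2
  set A0 := lam 0 * c 0 with hA0
  set A1 := lam 1 * c 1 with hA1
  set A2 := lam 2 * c 2 with hA2
  have stepA : S0 * D12 = S1 * D20 := by
    rw [hS0, hS1, hD12, hD20]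
    linear_combination D01 * h02 - D01 * h12 - D12 * h10 + D20 * h01
  have stepA' : S1 * D20 = S2 * D01 := by
    rw [hS1, hS2, hD20, hD01]
    linear_combination D12 * h10 - D12 * h20 - D20 * h21 + D01 * h12
  have stepB : A0 * D20 = A1 * D12 := by
    rw [hA0, hA1, hD20, hD12]
    linear_combination (-(v 2 1)) * hsumc 0 + v 2 0 * hsumc 1
  have stepB' : A1 * D01 = A2 * D20 := by
    rw [hA1, hA2, hD01, hD20]
    linear_combination (-(v 0 1)) * hsumc 0 + v 0 0 * hsumc 1
  have key01 : A0 * S0 = A1 * S1 := by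
    have h : (A0 * S0) * (D12 * D20) = (A1 * S1) * (D12 * D20) := by
      linear_combination (A0 * D20) * stepA + (S1 * D20) * stepB
    exact mul_right_cancel₀ (mul_ne_zero d12 d20) h
  have key12 : A1 * S1 = A2 * S2 := by
    have h : (A1 * S1) * (D20 * D01) = (A2 * S2) * (D20 * D01) := by
      linear_combination (A1 * D01) * stepA' + (S2 * D01) * stepB'
    exact mul_right_cancel₀ (mul_ne_zero d20 d01) h
  -- express the stability difference
  have hdiff : ∀ k, ⟪v k, n k⟫ - ⟪w k, n k⟫
      = c k * (v k 0 * v k 0 + v k 1 * v k 1 - (w k 0 * v k 0 + w k 1 * v k 1)) := by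
    intro k
    rw [hc k, real_inner_smul_right, real_inner_smul_right, inner_coord', inner_coord']
    ring
  have hF0 : lam 0 * (⟪v 0, n 0⟫ - ⟪w 0, n 0⟫) = A1 * S1 := by
    rw [hdiff 0, ← hS0]
    have k := key01; rw [hA0] at k
    linear_combination k
  have hF1 : lam 1 * (⟪v 1, n 1⟫ - ⟪w 1, n 1⟫) = A1 * S1 := by
    rw [hdiff 1, ← hS1, hA1]; ring
  have hF2 : lam 2 * (⟪v 2, n 2⟫ - ⟪w 2, n 2⟫) = A1 * S1 := by
    rw [hdiff 2, ← hS2]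
    have k := key12.symm; rw [hA2] at k
    linear_combination k
  have hF : ∀ k, lam k * (⟪v k, n k⟫ - ⟪w k, n k⟫) = A1 * S1 := by
    intro k
    fin_cases k
    · exact hF0
    · exact hF1
    · exact hF2
  obtain ⟨i0, hi0⟩ := hex
  have h1 : 0 < lam i0 * (⟪v i0, n i0⟫ - ⟪w i0, n i0⟫) :=
    mul_pos (hpos i0) (by linarith)
  rw [hF i0] at h1
  have h2 : 0 < lam i * (⟪v i, n i⟫ - ⟪w i, n i⟫) := by rw [hF i]; exact h1
  nlinarith [hpos i, h2]

end
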